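/- Let A and B be n×n Hermitian matrices with eigenvalues γ_1 ≥ ⋯ ≥ γ_n and δ_1 ≥ ⋯ ≥ δ_n respectively. Then ∑_i γ_i δ_{n+1-i} ≤ tr(AB) ≤ ∑_i γ_i δ_i. -/

import Mathlib

open Finset Matrix

private lemma perm_sum {n : ℕ} (a b : Fin n → ℝ) (σ : Equiv.Perm (Fin n)) (i : Fin n) :
    ∑ j, a i * b j * (σ.permMatrix ℝ) i j = a i * b (σ i) := by
  rw [Finset.sum_eq_single (σ i)]
  · simp [Equiv.Perm.permMatrix, PEquiv.toMatrix_apply, Equiv.toPEquiv_apply]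
  · intro j _ hj
    simp [Equiv.Perm.permMatrix, PEquiv.toMatrix_apply, Equiv.toPEquiv_apply, Ne.symm hj]
  · simp

private lemma ds_bound {n : ℕ} (a b : Fin n → ℝ) (ha : Antitone a) (hb : Antitone b)
    (S : Matrix (Fin n) (Fin n) ℝ) (hS : S ∈ doublyStochastic ℝ (Fin n)) :
    (∑ i, a i * b i.rev) ≤ (∑ i, ∑ j, a i * b j * S i j) ∧
      (∑ i, ∑ j, a i * b j * S i j) ≤ ∑ i, a i * b i := by
  obtain ⟨w, hw0, hw1, hwS⟩ := exists_eq_sum_perm_of_mem_doublyStochastic hS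
  have mono : Monovary a b := by
    intro i j h
    rcases le_or_gt j i with hji | hij
    · exact ha hji
    · exact absurd (hb hij.le) (not_le.2 h)
  have anti : Antivary a (b ∘ Fin.rev) := by
    intro i j h
    rcases le_or_gt j i with hji | hij
    · exact absurd (hb (Fin.rev_le_rev.2 hji)) (not_le.2 h)
    · exact ha hij.le
  have key : (∑ i, ∑ j, a i * b j * S i j)
      = ∑ σ : Equiv.Perm (Fin n), w σ * ∑ i, a i * b (σ i) := by
    rw [← hwS]
    have h1 : ∀ i j : Fin n,
        a i * b j * (∑ σ : Equiv.Perm (Fin n), w σ • σ.permMatrix ℝ) i j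
          = ∑ σ : Equiv.Perm (Fin n), w σ * (a i * b j * (σ.permMatrix ℝ) i j) := by
      intro i j
      rw [Matrix.sum_apply, Finset.mul_sum]
      exact Finset.sum_congr rfl fun σ _ => by simp [smul_eq_mul]; ring_nf
    simp_rw [h1]
    have h2 : ∑ i, ∑ j, ∑ σ : Equiv.Perm (Fin n), w σ * (a i * b j * (σ.permMatrix ℝ) i j)
        = ∑ σ : Equiv.Perm (Fin n), ∑ i, ∑ j, w σ * (a i * b j * (σ.permMatrix ℝ) i j) :=
      (Finset.sum_congr rfl fun i _ => Finset.sum_comm).trans Finset.sum_comm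
    rw [h2]
    refine Finset.sum_congr rfl fun σ _ => ?_
    rw [Finset.mul_sum]
    refine Finset.sum_congr rfl fun i _ => ?_
    rw [← Finset.mul_sum, perm_sum a b σ i]
  constructor
  · rw [key]
    calc ∑ i, a i * b i.rev = ∑ σ : Equiv.Perm (Fin n), w σ * ∑ i, a i * b i.rev := by
          rw [← Finset.sum_mul, hw1, one_mul]
      _ ≤ ∑ σ : Equiv.Perm (Fin n), w σ * ∑ i, a i * b (σ i) := by
          refine Finset.sum_le_sum fun σ _ => mul_le_mul_of_nonneg_left ?_ (hw0 σ)
          have h := anti.sum_mul_le_sum_mul_comp_perm (σ := σ.trans Fin.revPerm)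
          simpa [Function.comp, Fin.rev_rev] using h
  · rw [key]
    calc ∑ σ : Equiv.Perm (Fin n), w σ * ∑ i, a i * b (σ i)
        ≤ ∑ σ : Equiv.Perm (Fin n), w σ * ∑ i, a i * b i := by
          refine Finset.sum_le_sum fun σ _ => mul_le_mul_of_nonneg_left ?_ (hw0 σ)
          exact mono.sum_mul_comp_perm_le_sum_mul
      _ = ∑ i, a i * b i := by rw [← Finset.sum_mul, hw1, one_mul]

theorem stmt_0 (n : ℕ) (A B : Matrix (Fin n) (Fin n) ℂ)
    (hA : A.IsHermitian) (hB : B.IsHermitian)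
    (γ δ : Fin n → ℝ)
    (hγanti : ∀ i j : Fin n, i ≤ j → γ j ≤ γ i)
    (hδanti : ∀ i j : Fin n, i ≤ j → δ j ≤ δ i)
    (hγ : ∃ σ : Equiv.Perm (Fin n), ∀ i, γ i = hA.eigenvalues (σ i))
    (hδ : ∃ σ : Equiv.Perm (Fin n), ∀ i, δ i = hB.eigenvalues (σ i)) :
    (∑ i : Fin n, γ i * δ i.rev) ≤ ((A * B).trace).re ∧
      ((A * B).trace).re ≤ ∑ i : Fin n, γ i * δ i := by
  obtain ⟨σ, hσ⟩ := hγ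
  obtain ⟨τ, hτ⟩ := hδ
  set γ' := hA.eigenvalues with hγ'
  set δ' := hB.eigenvalues with hδ'
  set U : Matrix (Fin n) (Fin n) ℂ := (hA.eigenvectorUnitary : Matrix (Fin n) (Fin n) ℂ) with hUdef
  set V : Matrix (Fin n) (Fin n) ℂ := (hB.eigenvectorUnitary : Matrix (Fin n) (Fin n) ℂ) with hVdef
  have hU1 : U * star U = 1 := Matrix.mem_unitaryGroup_iff.mp hA.eigenvectorUnitary.2
  have hU2 : star U * U = 1 := Matrix.mem_unitaryGroup_iff'.mp hA.eigenvectorUnitary.2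
  have hV1 : V * star V = 1 := Matrix.mem_unitaryGroup_iff.mp hB.eigenvectorUnitary.2
  have hV2 : star V * V = 1 := Matrix.mem_unitaryGroup_iff'.mp hB.eigenvectorUnitary.2
  set W : Matrix (Fin n) (Fin n) ℂ := star U * V with hWdef
  have hW1 : W * star W = 1 := by
    rw [hWdef]
    rw [Matrix.star_mul, star_star]
    calc star U * V * (star V * U) = star U * (V * star V) * U := by
          simp [Matrix.mul_assoc]
      _ = 1 := by rw [hV1, Matrix.mul_one, hU2]
  have hW2 : star W * W = 1 := by
    rw [hWdef]
    rw [Matrix.star_mul, star_star]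
    calc star V * U * (star U * V) = star V * (U * star U) * V := by
          simp [Matrix.mul_assoc]
      _ = 1 := by rw [hU1, Matrix.mul_one, hV2]
  set Dγ : Matrix (Fin n) (Fin n) ℂ := Matrix.diagonal (fun i => (γ' i : ℂ)) with hDγ
  set Dδ : Matrix (Fin n) (Fin n) ℂ := Matrix.diagonal (fun i => (δ' i : ℂ)) with hDδ
  have hAspec : A = U * Dγ * star U := by
    have := hA.spectral_theorem
    convert this using 2
    rw [Unitary.conjStarAlgAut_apply]; rfl
  have hBspec : B = V * Dδ * star V := by
    have := hB.spectral_theorem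
    convert this using 2
    rw [Unitary.conjStarAlgAut_apply]; rfl
  have hABeq : A * B = U * (Dγ * W * Dδ * star W) * star U := by
    rw [hAspec, hBspec, hWdef]
    rw [Matrix.star_mul, star_star]
    simp only [Matrix.mul_assoc]
    rw [hU1, Matrix.mul_one]
  have htr : (A * B).trace = (Dγ * W * Dδ * star W).trace := by
    rw [hABeq]
    rw [Matrix.trace_mul_comm (U * (Dγ * W * Dδ * star W)) (star U)]
    rw [← Matrix.mul_assoc, hU2, Matrix.one_mul]
  have htr2 : (A * B).trace = ∑ i, ∑ j, ((γ' i * δ' j * Complex.normSq (W i j) : ℝ) : ℂ) := by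
    rw [htr]
    rw [Matrix.trace]
    refine Finset.sum_congr rfl fun i _ => ?_
    rw [Matrix.diag]
    rw [show Dγ * W * Dδ * star W = Dγ * (W * Dδ * star W) by simp [Matrix.mul_assoc]]
    rw [hDγ, Matrix.diagonal_mul]
    rw [Matrix.mul_apply]
    rw [Finset.mul_sum]
    refine Finset.sum_congr rfl fun j _ => ?_
    rw [Matrix.mul_diagonal, Matrix.star_apply]
    rw [show W i j * (δ' j : ℂ) * star (W i j) = (δ' j : ℂ) * (W i j * (starRingEnd ℂ) (W i j))
      from by simp [Complex.star_def]; ring]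
    rw [Complex.mul_conj]
    push_cast
    ring
  have htrre : ((A * B).trace).re = ∑ i, ∑ j, γ' i * δ' j * Complex.normSq (W i j) := by
    rw [htr2, Complex.re_sum]
    refine Finset.sum_congr rfl fun i _ => ?_
    rw [Complex.re_sum]
    exact Finset.sum_congr rfl fun j _ => Complex.ofReal_re _
  -- doubly stochastic matrix
  set S : Matrix (Fin n) (Fin n) ℝ := fun i j => Complex.normSq (W (σ i) (τ j)) with hSdef
  have hrow : ∀ i : Fin n, ∑ j, Complex.normSq (W i j) = 1 := by
    intro i
    have h : (W * star W) i i = (1 : Matrix (Fin n) (Fin n) ℂ) i i := by rw [hW1]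
    rw [Matrix.mul_apply, Matrix.one_apply_eq] at h
    have h2 : ∑ j, ((Complex.normSq (W i j) : ℝ) : ℂ) = 1 := by
      rw [← h]
      refine Finset.sum_congr rfl fun j _ => ?_
      rw [Matrix.star_apply, Complex.star_def, Complex.mul_conj]
    have := congrArg Complex.re h2
    rw [Complex.re_sum] at this
    simpa using this
  have hcol : ∀ j : Fin n, ∑ i, Complex.normSq (W i j) = 1 := by
    intro j
    have h : (star W * W) j j = (1 : Matrix (Fin n) (Fin n) ℂ) j j := by rw [hW2]
    rw [Matrix.mul_apply, Matrix.one_apply_eq] at h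
    have h2 : ∑ i, ((Complex.normSq (W i j) : ℝ) : ℂ) = 1 := by
      rw [← h]
      refine Finset.sum_congr rfl fun i _ => ?_
      rw [Matrix.star_apply, Complex.star_def, mul_comm, Complex.mul_conj]
    have := congrArg Complex.re h2
    rw [Complex.re_sum] at this
    simpa using this
  have hSds : S ∈ doublyStochastic ℝ (Fin n) := by
    rw [mem_doublyStochastic_iff_sum]
    refine ⟨fun i j => Complex.normSq_nonneg _, fun i => ?_, fun j => ?_⟩
    · rw [hSdef]
      simpa using Equiv.sum_comp τ (fun j => Complex.normSq (W (σ i) j)) ▸ hrow (σ i)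
    · rw [hSdef]
      simpa using Equiv.sum_comp σ (fun i => Complex.normSq (W i (τ j))) ▸ hcol (τ j)
  have hre : ((A * B).trace).re = ∑ i, ∑ j, γ i * δ j * S i j := by
    rw [htrre]
    rw [← Equiv.sum_comp σ (fun i => ∑ j, γ' i * δ' j * Complex.normSq (W i j))]
    refine Finset.sum_congr rfl fun i _ => ?_
    rw [← Equiv.sum_comp τ (fun j => γ' (σ i) * δ' j * Complex.normSq (W (σ i) j))]
    refine Finset.sum_congr rfl fun j _ => ?_
    rw [hσ i, hτ j]
  have haγ : Antitone γ := fun i j h => hγanti i j h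
  have haδ : Antitone δ := fun i j h => hδanti i j h
  obtain ⟨h1, h2⟩ := ds_bound γ δ haγ haδ S hSds
  rw [hre]
  exact ⟨h1, h2⟩
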